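/- Assume cov(ℳ) = 𝔠, i.e., the least cardinality of a family of meager subsets of ℤ^ℕ covering ℤ^ℕ equals the cardinality of the continuum 𝔠 = 2^{ℵ₀}. Then there exist 𝔠-Luzin subsets L₀ and L₁ of ℤ^ℕ, each satisfying S1(Ω,Ω), such that L₀ + L₁ = ℤ^ℕ. -/

import Mathlib

open Set Filter Pointwise

/-- `𝒰` is an ω-cover of `S`: `S ∉ 𝒰` and every finite subset of `S` is contained in
some member of `𝒰`. -/
def IsOmegaCover {α : Type*} (S : Set α) (𝒰 : Set (Set α)) : Prop :=
  S ∉ 𝒰 ∧ ∀ F : Set α, F ⊆ S → F.Finite → ∃ U ∈ 𝒰, F ⊆ U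

/-- `S` satisfies `S1(Ω,Ω)`: for every sequence of countable open ω-covers of `S` one can
pick one member from each so that the chosen sets form an ω-cover of `S`. -/
def S1OmegaOmega {α : Type*} [TopologicalSpace α] (S : Set α) : Prop :=
  ∀ 𝒰 : ℕ → Set (Set α),
    (∀ n, (𝒰 n).Countable ∧ (∀ U ∈ 𝒰 n, IsOpen U) ∧ IsOmegaCover S (𝒰 n)) →
    ∃ U : ℕ → Set α, (∀ n, U n ∈ 𝒰 n) ∧ IsOmegaCover S (Set.range U)

/-- `L ⊆ ℤ^ℕ` is `𝔠`-Luzin: `|L| ≥ 𝔠` and `|L ∩ M| < 𝔠` for every meager `M`. -/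
def IsLuzinZN (L : Set (ℕ → ℤ)) : Prop :=
  Cardinal.continuum ≤ Cardinal.mk L ∧
    ∀ M : Set (ℕ → ℤ), IsMeagre M → Cardinal.mk ↥(L ∩ M) < Cardinal.continuum

namespace Stmt12Aux
open Cardinal TopologicalSpace

abbrev XX : Type := ℕ → ℤ

noncomputable local instance : DecidableEq XX := Classical.decEq _

/-- a countable basis of `ℤ^ℕ` with no empty set -/
noncomputable def Bas : Set (Set XX) := (exists_countable_basis XX).choose

lemma Bas_countable : Bas.Countable := (exists_countable_basis XX).choose_spec.1
lemma Bas_not_empty : ∅ ∉ Bas := (exists_countable_basis XX).choose_spec.2.1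
lemma Bas_basis : IsTopologicalBasis Bas := (exists_countable_basis XX).choose_spec.2.2
lemma Bas_nonempty {W : Set XX} (hW : W ∈ Bas) : W.Nonempty := by
  rcases eq_empty_or_nonempty W with h | h
  · exact absurd (h ▸ hW) Bas_not_empty
  · exact h
lemma Bas_open {W : Set XX} (hW : W ∈ Bas) : IsOpen W := Bas_basis.isOpen hW

instance : Countable ↥Bas := Bas_countable.to_subtype

/-- every singleton in `ℤ^ℕ` is nowhere dense -/
lemma singleton_nwd (x : XX) : IsNowhereDense ({x} : Set XX) := by
  rw [IsNowhereDense, closure_singleton]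
  by_contra h
  have hne : (interior ({x} : Set XX)).Nonempty := nonempty_iff_ne_empty.2 h
  have hsub : interior ({x} : Set XX) ⊆ {x} := interior_subset
  have hopen : IsOpen (interior ({x} : Set XX)) := isOpen_interior
  rcases hne with ⟨y, hy⟩
  have hyx : y = x := hsub hy
  subst hyx
  rcases isOpen_pi_iff.1 hopen y hy with ⟨I, u, hu, hsubI⟩
  set k : ℕ := (I.sup id) + 1 with hk
  have hkI : k ∉ I := by
    intro hkmem
    have := Finset.le_sup (f := id) hkmem
    simp only [id] at this
    omega
  set z : XX := Function.update y k (y k + 1) with hz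
  have hzmem : z ∈ (I : Set ℕ).pi u := by
    intro i hi
    have : z i = y i := Function.update_of_ne (by rintro rfl; exact hkI hi) _ _
    rw [this]
    exact (hu i hi).2
  have : z ∈ interior ({y} : Set XX) := hsubI hzmem
  have : z = y := hsub this
  have : z k = y k := congrFun this k
  rw [hz, Function.update_self] at this
  omega

lemma countable_isMeagre {s : Set XX} (hs : s.Countable) : IsMeagre s := by
  rw [isMeagre_iff_countable_union_isNowhereDense]
  refine ⟨(fun x => ({x} : Set XX)) '' s, ?_, hs.image _, ?_⟩
  · rintro t ⟨x, _, rfl⟩; exact singleton_nwd x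
  · intro x hx; exact ⟨{x}, ⟨x, hx, rfl⟩, rfl⟩

lemma closed_nwd_isMeagre {s : Set XX} (hc : IsClosed s) (hi : interior s = ∅) :
    IsMeagre s := by
  rw [isMeagre_iff_countable_union_isNowhereDense]
  exact ⟨{s}, by simpa [IsNowhereDense, hc.closure_eq] using hi, countable_singleton s,
    by simp⟩

lemma dense_open_compl_isMeagre {s : Set XX} (ho : IsOpen s) (hd : Dense s) :
    IsMeagre sᶜ :=
  closed_nwd_isMeagre (isClosed_compl_iff.2 ho) (by
    rw [interior_compl, hd.closure_eq, compl_univ])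

/-- the eventually-zero sequences -/
def Qd : Set XX := {f | ∃ N, ∀ n, N ≤ n → f n = 0}

lemma Qd_countable : Qd.Countable := by
  have : Qd ⊆ ⋃ N : ℕ, Set.range (fun (g : Fin N → ℤ) => (fun n => if h : n < N then g ⟨n, h⟩ else 0 : XX)) := by
    rintro f ⟨N, hN⟩
    refine mem_iUnion.2 ⟨N, ⟨fun i => f i, ?_⟩⟩
    funext n
    by_cases h : n < N
    · simp [h]
    · simp only [h, dif_neg, not_false_iff]
      exact (hN n (by omega)).symm
  exact (countable_iUnion (fun N => countable_range _)).mono this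

lemma Qd_dense : Dense Qd := by
  intro x
  rw [mem_closure_iff]
  intro O hO hxO
  rcases isOpen_pi_iff.1 hO x hxO with ⟨I, u, hu, hsub⟩
  refine ⟨fun n => if n ∈ I then x n else 0, ?_, ?_⟩
  · apply hsub
    intro i hi
    show (if i ∈ I then x i else 0) ∈ u i
    rw [if_pos (Finset.mem_coe.1 hi)]
    exact (hu i hi).2
  · exact ⟨(I.sup id) + 1, fun n hn => by
      have : n ∉ I := by
        intro hmem
        have := Finset.le_sup (f := id) hmem
        simp only [id] at this
        omega
      simp [this]⟩

/-- preimage of meagre set under `z ↦ c - z` is meagre -/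
lemma meagre_preimage_sub (c : XX) {s : Set XX} (hs : IsMeagre s) :
    IsMeagre ((fun z => c - z) ⁻¹' s) := by
  have hcont : Continuous (fun z : XX => c - z) := continuous_const.sub continuous_id
  have hinv : ∀ z : XX, c - (c - z) = z := fun z => by ring
  have hopen : IsOpenMap (fun z : XX => c - z) := by
    intro U hU
    have : (fun z : XX => c - z) '' U = (fun z : XX => c - z) ⁻¹' U := by
      ext y
      constructor
      · rintro ⟨z, hz, rfl⟩; simpa [hinv] using hz
      · intro hy; exact ⟨c - y, hy, hinv y⟩
    rw [this]
    exact hU.preimage hcont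
  exact hs.preimage_of_isOpenMap hcont hopen


/-! ### cardinal toolbox -/

lemma mk_XX : #XX = 𝔠 := by
  rw [show XX = (ℕ → ℤ) from rfl, ← Cardinal.power_def, Cardinal.mk_int, Cardinal.mk_nat,
    Cardinal.aleph0_power_aleph0]

/-- the type of open subsets of `ℤ^ℕ` -/
def Opn : Type := {U : Set XX // IsOpen U}

instance : Nonempty Opn := ⟨⟨∅, isOpen_empty⟩⟩

lemma mk_Opn_le : #Opn ≤ 𝔠 := by
  have hinj : Function.Injective (fun U : Opn => {b : ↥Bas | (b : Set XX) ⊆ U.1}) := by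
    intro U U' h
    have h' : {b : ↥Bas | (b : Set XX) ⊆ U.1} = {b : ↥Bas | (b : Set XX) ⊆ U'.1} := h
    have key : ∀ V : Opn, V.1 = ⋃₀ {s ∈ Bas | s ⊆ V.1} := fun V =>
      Bas_basis.open_eq_sUnion' V.2
    have : {s ∈ Bas | s ⊆ U.1} = {s ∈ Bas | s ⊆ U'.1} := by
      ext s
      constructor
      · rintro ⟨hs, hsub⟩
        refine ⟨hs, ?_⟩
        have h2 : (⟨s, hs⟩ : ↥Bas) ∈ {b : ↥Bas | (b : Set XX) ⊆ U.1} := hsub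
        rw [h'] at h2
        exact h2
      · rintro ⟨hs, hsub⟩
        refine ⟨hs, ?_⟩
        have h2 : (⟨s, hs⟩ : ↥Bas) ∈ {b : ↥Bas | (b : Set XX) ⊆ U'.1} := hsub
        rw [← h'] at h2
        exact h2
    apply Subtype.ext
    rw [key U, key U', this]
  calc #Opn ≤ #(Set ↥Bas) := Cardinal.mk_le_of_injective hinj
    _ = 2 ^ #(↥Bas) := Cardinal.mk_set
    _ ≤ 2 ^ ℵ₀ := by
        apply Cardinal.power_le_power_left (by norm_num)
        exact Cardinal.mk_le_aleph0
    _ = 𝔠 := Cardinal.two_power_aleph0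

/-- the type of closed nowhere dense subsets of `ℤ^ℕ` -/
def NWD : Type := {C : Set XX // IsClosed C ∧ interior C = ∅}

instance : Nonempty NWD := ⟨⟨∅, isClosed_empty, interior_empty⟩⟩

lemma NWD_isMeagre (C : NWD) : IsMeagre C.1 := closed_nwd_isMeagre C.2.1 C.2.2

lemma mk_NWD_le : #NWD ≤ 𝔠 := by
  have hinj : Function.Injective (fun C : NWD => (⟨C.1ᶜ, C.2.1.isOpen_compl⟩ : Opn)) := by
    intro C C' h
    apply Subtype.ext
    have := congrArg Subtype.val h
    simp only at this
    have := congrArg compl this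
    simpa using this
  exact (Cardinal.mk_le_of_injective hinj).trans mk_Opn_le

/-- enumeration targets: a sequence of enumerated families of open sets, a sequence of
closed nowhere dense sets, and a point -/
abbrev Enum : Type := (ℕ → ℕ → Opn) × (ℕ → NWD) × XX

instance : Nonempty Enum := inferInstance

lemma mk_fun_le {A : Type} (h : #A ≤ 𝔠) : #(ℕ → A) ≤ 𝔠 := by
  calc #(ℕ → A) = #A ^ (ℵ₀ : Cardinal) := by rw [← Cardinal.power_def, Cardinal.mk_nat]
    _ ≤ 𝔠 ^ (ℵ₀ : Cardinal) := Cardinal.power_le_power_right h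
    _ = 𝔠 := Cardinal.continuum_power_aleph0

lemma mk_Enum_le : #Enum ≤ 𝔠 := by
  have h1 : #(ℕ → ℕ → Opn) ≤ 𝔠 := mk_fun_le (mk_fun_le mk_Opn_le)
  have h2 : #(ℕ → NWD) ≤ 𝔠 := mk_fun_le mk_NWD_le
  have h3 : #XX ≤ 𝔠 := le_of_eq mk_XX
  calc #Enum = #(ℕ → ℕ → Opn) * (#(ℕ → NWD) * #XX) := by
        rw [Cardinal.mk_prod, Cardinal.mk_prod]; simp
    _ ≤ 𝔠 * (𝔠 * 𝔠) := by
        exact mul_le_mul' h1 (mul_le_mul' h2 h3)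
    _ = 𝔠 := by
        rw [Cardinal.mul_eq_self Cardinal.aleph0_le_continuum,
          Cardinal.mul_eq_self Cardinal.aleph0_le_continuum]

/-- the index (stage) type : a well-order of size continuum -/
abbrev II : Type := (Cardinal.continuum.ord).ToType

lemma mk_II : #II = 𝔠 := Cardinal.mk_ord_toType _

lemma mk_Iio_lt (β : II) : #(Iio β) < 𝔠 := Cardinal.mk_Iio_ord_toType β

lemma one_lt_cont : (1 : Cardinal) < 𝔠 :=
  lt_of_lt_of_le Cardinal.one_lt_aleph0 Cardinal.aleph0_le_continuum

lemma aleph0_lt_cont : (ℵ₀ : Cardinal) < 𝔠 := Cardinal.aleph0_lt_continuum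

lemma mk_Iic_lt (β : II) : #(Iic β) < 𝔠 := by
  rw [← Set.Iio_insert]
  exact lt_of_le_of_lt Cardinal.mk_insert_le
    (Cardinal.add_lt_of_lt Cardinal.aleph0_le_continuum (mk_Iio_lt β) one_lt_cont)

lemma exists_surj (A : Type) [Nonempty A] (h : #A ≤ 𝔠) :
    ∃ f : II → A, Function.Surjective f := by
  have : #A ≤ #II := by rw [mk_II]; exact h
  rcases (Cardinal.le_def A II).1 this with ⟨e⟩
  exact ⟨Function.invFun e, Function.invFun_surjective e.injective⟩

/-- the key consequence of `cov(M) = c`: fewer than continuum many meagre sets do not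
cover the space -/
lemma nocover
    (hcov : sInf {c : Cardinal | ∃ 𝒜 : Set (Set (ℕ → ℤ)),
        (∀ A ∈ 𝒜, IsMeagre A) ∧ ⋃₀ 𝒜 = Set.univ ∧ c = Cardinal.mk 𝒜} = Cardinal.continuum)
    {T : Type} (A : T → Set XX) (hT : #T < 𝔠) (hA : ∀ t, IsMeagre (A t)) :
    ∃ z : XX, ∀ t, z ∉ A t := by
  by_contra h
  push_neg at h
  have hcover : ⋃₀ (Set.range A) = Set.univ := by
    apply eq_univ_of_forall
    intro z
    rcases h z with ⟨t, ht⟩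
    exact ⟨A t, ⟨t, rfl⟩, ht⟩
  have hmem : #(Set.range A) ∈ {c : Cardinal | ∃ 𝒜 : Set (Set (ℕ → ℤ)),
      (∀ A ∈ 𝒜, IsMeagre A) ∧ ⋃₀ 𝒜 = Set.univ ∧ c = Cardinal.mk 𝒜} := by
    refine ⟨Set.range A, ?_, hcover, rfl⟩
    rintro B ⟨t, rfl⟩
    exact hA t
  have : 𝔠 ≤ #(Set.range A) := hcov ▸ csInf_le' hmem
  exact absurd (this.trans Cardinal.mk_range_le) (not_le.2 hT)


/-! ### the capture machinery -/

/-- `w`-many basis sets all meet `S` -/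
def meets (w : List ↥Bas) (S : Set XX) : Prop := ∀ W ∈ w, ((W : Set XX) ∩ S).Nonempty

/-- finite set `F` is captured by some `V k` which moreover meets any prescribed
finite family of basic open sets -/
def Gstar (V : ℕ → Set XX) (F : Finset XX) : Prop :=
  ∀ w : List ↥Bas, ∃ k, (∀ x ∈ F, x ∈ V k) ∧ meets w (V k)

def DsetK (V : ℕ → Set XX) (F : Finset XX) (w : List ↥Bas) (k : ℕ) : Set XX :=
  {x | ((∀ y ∈ F, y ∈ V k) ∧ meets w (V k)) ∧ x ∈ V k}

def Dset (V : ℕ → Set XX) (F : Finset XX) (w : List ↥Bas) : Set XX :=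
  ⋃ k, DsetK V F w k

lemma Dset_open {V : ℕ → Set XX} (hV : ∀ k, IsOpen (V k)) (F : Finset XX) (w : List ↥Bas) :
    IsOpen (Dset V F w) := by
  apply isOpen_iUnion
  intro k
  by_cases hc : (∀ y ∈ F, y ∈ V k) ∧ meets w (V k)
  · have : DsetK V F w k = V k := by
      ext x
      simp only [DsetK, mem_setOf_eq, and_iff_right hc]
    rw [this]; exact hV k
  · have : DsetK V F w k = ∅ := by
      ext x; simp only [DsetK, mem_setOf_eq, mem_empty_iff_false, iff_false]
      rintro ⟨h1, _⟩; exact hc h1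
    rw [this]; exact isOpen_empty

lemma Dset_dense {V : ℕ → Set XX} {F : Finset XX} (hG : Gstar V F) (w : List ↥Bas) :
    Dense (Dset V F w) := by
  rw [Bas_basis.dense_iff]
  intro o ho hone
  rcases hG (⟨o, ho⟩ :: w) with ⟨k, hFk, hmeets⟩
  have h1 : ((o : Set XX) ∩ V k).Nonempty := hmeets ⟨o, ho⟩ List.mem_cons_self
  rcases h1 with ⟨y, hyo, hyV⟩
  exact ⟨y, hyo, mem_iUnion.2 ⟨k, ⟨⟨hFk, fun W hW => hmeets W (List.mem_cons_of_mem _ hW)⟩, hyV⟩⟩⟩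

lemma Gstar_insert {V : ℕ → Set XX} {F : Finset XX} {z : XX}
    (h : ∀ w : List ↥Bas, z ∈ Dset V F w) : Gstar V (insert z F) := by
  intro w
  rcases mem_iUnion.1 (h w) with ⟨k, ⟨⟨hFk, hmeets⟩, hzk⟩⟩
  refine ⟨k, ?_, hmeets⟩
  intro x hx
  rcases Finset.mem_insert.1 hx with rfl | hx
  · exact hzk
  · exact hFk x hx

lemma Gstar_mono {V : ℕ → Set XX} {F F' : Finset XX} (hsub : F ⊆ F') (h : Gstar V F') :
    Gstar V F := by
  intro w
  rcases h w with ⟨k, h1, h2⟩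
  exact ⟨k, fun x hx => h1 x (hsub hx), h2⟩

/-- the checkable condition at a stage: every finite subset of `P` is contained in some
member of each family -/
def Ccond (P : Set XX) (e : ℕ → ℕ → Opn) : Prop :=
  ∀ (n : ℕ) (F : Finset XX), ↑F ⊆ P → ∃ j, ∀ x ∈ F, x ∈ (e n j).1

/-- choice of a "generic" selection `V` at a stage -/
lemma exists_V
    (hcov : sInf {c : Cardinal | ∃ 𝒜 : Set (Set (ℕ → ℤ)),
        (∀ A ∈ 𝒜, IsMeagre A) ∧ ⋃₀ 𝒜 = Set.univ ∧ c = Cardinal.mk 𝒜} = Cardinal.continuum)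
    (P : Set XX) (hP : #P < 𝔠) (hQP : Qd ⊆ P) (e : ℕ → ℕ → Opn) :
    ∃ V : ℕ → Set XX, (∀ k, ∃ j, V k = (e k j).1) ∧
      (Ccond P e → ∀ F : Finset XX, ↑F ⊆ P → Gstar V F) := by
  classical
  by_cases hC : Ccond P e
  · -- the "good at slot k with index j" predicate
    set good : ℕ → ℕ → List ↥P → List ↥Bas → Prop :=
      fun k j l w => (∀ x : ↥P, x ∈ l → (x : XX) ∈ (e k j).1) ∧ meets w ((e k j).1) with hgood
    set Bad : List ↥P × List ↥Bas → Set XX :=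
      fun t => {g : XX | ∀ k, ¬ good k ((g k).natAbs) t.1 t.2} with hBad
    have hBadMeagre : ∀ t, IsMeagre (Bad t) := by
      rintro ⟨l, w⟩
      apply closed_nwd_isMeagre
      · have : Bad (l, w) = ⋂ k, (fun g : XX => g k) ⁻¹' {z : ℤ | ¬ good k z.natAbs l w} := by
          ext g; simp [hBad, mem_iInter]
        rw [this]
        exact isClosed_iInter fun k => (isClosed_discrete _).preimage (continuous_apply k)
      · rw [interior_eq_empty_iff_dense_compl]
        intro x
        rw [mem_closure_iff]
        intro O hO hxO
        rcases isOpen_pi_iff.1 hO x hxO with ⟨I, u, hu, hsub⟩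
        set k : ℕ := (I.sup id) + 1 with hk
        have hkI : k ∉ I := by
          intro hkmem
          have := Finset.le_sup (f := id) hkmem
          simp only [id] at this
          omega
        -- witnesses in Qd for the members of w
        have hwit : ∀ W : ↥Bas, ∃ q, q ∈ Qd ∧ q ∈ (W : Set XX) := by
          intro W
          have := Qd_dense.inter_open_nonempty (W : Set XX) (Bas_open W.2) (Bas_nonempty W.2)
          rcases this with ⟨q, hq1, hq2⟩
          exact ⟨q, hq2, hq1⟩
        set qw : ↥Bas → XX := fun W => (hwit W).choose with hqw
        set Fbig : Finset XX := (l.map (Subtype.val)).toFinset ∪ (w.map qw).toFinset with hFbig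
        have hFbigP : ↑Fbig ⊆ P := by
          intro y hy
          simp only [hFbig, Finset.coe_union, mem_union, Finset.mem_coe, List.mem_toFinset,
            List.mem_map] at hy
          rcases hy with ⟨a, _, rfl⟩ | ⟨W, _, rfl⟩
          · exact a.2
          · exact hQP (hwit W).choose_spec.1
        rcases hC k Fbig hFbigP with ⟨j, hj⟩
        refine ⟨Function.update x k (j : ℤ), ?_, ?_⟩
        · apply hsub
          intro i hi
          have hik : i ≠ k := by rintro rfl; exact hkI hi
          rw [Function.update_of_ne hik]
          exact (hu i hi).2
        · simp only [mem_compl_iff, hBad, mem_setOf_eq, not_forall, not_not]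
          refine ⟨k, ?_⟩
          rw [Function.update_self]
          have hnat : ((j : ℤ)).natAbs = j := Int.natAbs_natCast j
          rw [hnat]
          constructor
          · intro a ha
            apply hj
            simp only [hFbig, Finset.mem_union, List.mem_toFinset, List.mem_map]
            exact Or.inl ⟨a, ha, rfl⟩
          · intro W hW
            refine ⟨qw W, (hwit W).choose_spec.2, ?_⟩
            apply hj
            simp only [hFbig, Finset.mem_union, List.mem_toFinset, List.mem_map]
            exact Or.inr ⟨W, hW, rfl⟩
    -- count the bad sets
    have hT : #(List ↥P × List ↥Bas) < 𝔠 := by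
      rw [Cardinal.mk_prod]
      simp only [Cardinal.lift_id]
      apply Cardinal.mul_lt_of_lt Cardinal.aleph0_le_continuum
      · exact lt_of_le_of_lt (Cardinal.mk_list_le_max _)
          (max_lt aleph0_lt_cont hP)
      · exact lt_of_le_of_lt (Cardinal.mk_list_le_max _)
          (max_lt aleph0_lt_cont
            (lt_of_le_of_lt Cardinal.mk_le_aleph0 aleph0_lt_cont))
    rcases nocover hcov Bad hT hBadMeagre with ⟨g, hg⟩
    refine ⟨fun k => (e k ((g k).natAbs)).1, fun k => ⟨(g k).natAbs, rfl⟩, ?_⟩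
    intro _ F hF w
    set l : List ↥P := F.attach.toList.map (fun x => (⟨x.1, hF x.2⟩ : ↥P)) with hl
    have hgt := hg (l, w)
    simp only [hBad, mem_setOf_eq, not_forall, not_not] at hgt
    rcases hgt with ⟨k, hk1, hk2⟩
    refine ⟨k, ?_, hk2⟩
    intro x hx
    apply hk1 ⟨x, hF hx⟩
    rw [hl]
    exact List.mem_map.2 ⟨⟨x, hx⟩, Finset.mem_toList.2 (Finset.mem_attach _ _), rfl⟩
  · exact ⟨fun k => (e k 0).1, fun k => ⟨0, rfl⟩, fun h => absurd h hC⟩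


/-! ### the transfinite construction -/

/-- data of one stage : for each of the two sides, a selection `V : ℕ → Set XX` and a point -/
abbrev Data : Type := Bool → (ℕ → Set XX) × XX

instance : Inhabited Data := ⟨fun _ => (fun _ => ∅, 0)⟩

section Constr

variable (hcov : sInf {c : Cardinal | ∃ 𝒜 : Set (Set (ℕ → ℤ)),
        (∀ A ∈ 𝒜, IsMeagre A) ∧ ⋃₀ 𝒜 = Set.univ ∧ c = Cardinal.mk 𝒜} = Cardinal.continuum)

/-- the bookkeeping surjection -/
noncomputable def hEn : II → Enum := (exists_surj Enum mk_Enum_le).choose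

lemma hEn_surj : Function.Surjective hEn := (exists_surj Enum mk_Enum_le).choose_spec

noncomputable def eAt (β : II) : ℕ → ℕ → Opn := (hEn β).1
noncomputable def nwdAt (β : II) : ℕ → NWD := (hEn β).2.1
noncomputable def ptAt (β : II) : XX := (hEn β).2.2

/-- the part of the set built before stage `β` -/
def Lb (g : II → Data) (i : Bool) (β : II) : Set XX :=
  Qd ∪ {x | ∃ γ, γ < β ∧ ((g γ) i).2 = x}

lemma Qd_sub_Lb (g : II → Data) (i : Bool) (β : II) : Qd ⊆ Lb g i β := subset_union_left

lemma Lb_mono (g : II → Data) (i : Bool) {β β' : II} (h : β ≤ β') :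
    Lb g i β ⊆ Lb g i β' := by
  apply union_subset_union_right
  rintro x ⟨γ, hγ, rfl⟩
  exact ⟨γ, lt_of_lt_of_le hγ h, rfl⟩

lemma Lb_eq_image (g : II → Data) (i : Bool) (β : II) :
    {x | ∃ γ, γ < β ∧ ((g γ) i).2 = x} = (fun γ => ((g γ) i).2) '' (Iio β) := by
  ext x; simp [Set.mem_image]

lemma mk_Lb_lt (g : II → Data) (i : Bool) (β : II) : #(Lb g i β) < 𝔠 := by
  apply lt_of_le_of_lt (Cardinal.mk_union_le _ _)
  apply Cardinal.add_lt_of_lt Cardinal.aleph0_le_continuum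
  · exact lt_of_le_of_lt Qd_countable.le_aleph0 aleph0_lt_cont
  · rw [Lb_eq_image]
    exact lt_of_le_of_lt Cardinal.mk_image_le (mk_Iio_lt β)

/-- which selection is associated with stage `α ≤ β` (the current one for `α = β`) -/
def Vof (d : Data) (g : II → Data) (β α : II) (i : Bool) : ℕ → Set XX :=
  if α = β then (d i).1 else ((g α) i).1

/-- everything that must hold of the datum `d` chosen at stage `β` -/
structure StageOK (β : II) (g : II → Data) (d : Data) : Prop where
  vmem : ∀ i k, ∃ j, (d i).1 k = (eAt β k j).1
  vbase : ∀ i, Ccond (Lb g i β) (eAt β) →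
    ∀ F : Finset XX, ↑F ⊆ Lb g i β → Gstar (d i).1 F
  sum : (d false).2 + (d true).2 = ptAt β
  notQ : ∀ i, (d i).2 ∉ Qd
  avoidNwd : ∀ i γ, γ ≤ β → ∀ n, (d i).2 ∉ (nwdAt γ n).1
  distinct : ∀ i γ, γ < β → (d i).2 ≠ ((g γ) i).2
  step : ∀ i α (F : Finset XX) (w : List ↥Bas), α ≤ β → ↑F ⊆ Lb g i β →
    IsOpen (Dset (Vof d g β α i) F w) → Dense (Dset (Vof d g β α i) F w) →
    (d i).2 ∈ Dset (Vof d g β α i) F w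

lemma StageOK_congr {β : II} {g g' : II → Data} {d : Data}
    (hg : ∀ γ, γ < β → g γ = g' γ) (h : StageOK β g d) : StageOK β g' d := by
  have hLb : ∀ i, Lb g i β = Lb g' i β := by
    intro i
    unfold Lb
    congr 1
    ext x
    constructor
    · rintro ⟨γ, hγ, rfl⟩; exact ⟨γ, hγ, by rw [hg γ hγ]⟩
    · rintro ⟨γ, hγ, rfl⟩; exact ⟨γ, hγ, by rw [hg γ hγ]⟩
  have hVof : ∀ α i, α ≤ β → Vof d g β α i = Vof d g' β α i := by
    intro α i hαβ
    unfold Vof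
    by_cases hab : α = β
    · simp [hab]
    · simp only [hab, if_false]
      rw [hg α (lt_of_le_of_ne hαβ hab)]
  refine ⟨h.vmem, ?_, h.sum, h.notQ, h.avoidNwd, ?_, ?_⟩
  · intro i; rw [← hLb]; exact h.vbase i
  · intro i γ hγ; rw [← hg γ hγ]; exact h.distinct i γ hγ
  · intro i α F w hαβ hF
    rw [← hVof α i hαβ, ← hLb] at *
    exact h.step i α F w hαβ hF

include hcov in
/-- existence of a valid stage datum -/
lemma stage_exists (β : II) (g : II → Data) : ∃ d : Data, StageOK β g d := by
  classical
  -- first choose the selections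
  have hVex : ∀ i : Bool, ∃ V : ℕ → Set XX, (∀ k, ∃ j, V k = (eAt β k j).1) ∧
      (Ccond (Lb g i β) (eAt β) → ∀ F : Finset XX, ↑F ⊆ Lb g i β → Gstar V F) :=
    fun i => exists_V hcov (Lb g i β) (mk_Lb_lt g i β) (Qd_sub_Lb g i β) (eAt β)
  set VV : Bool → ℕ → Set XX := fun i => (hVex i).choose with hVV
  have hVVspec : ∀ i, (∀ k, ∃ j, VV i k = (eAt β k j).1) ∧
      (Ccond (Lb g i β) (eAt β) → ∀ F : Finset XX, ↑F ⊆ Lb g i β → Gstar (VV i) F) :=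
    fun i => (hVex i).choose_spec
  set Vsel : Bool → II → ℕ → Set XX := fun i α => if α = β then VV i else ((g α) i).1
    with hVsel
  -- now choose the point generically
  set PU : Set XX := Lb g false β ∪ Lb g true β with hPU
  set T : Type := (Bool × ↥(Iic β) × ℕ) ⊕ Bool ⊕ (Bool × ↥(Iio β)) ⊕
      (Bool × ↥(Iic β) × List ↥PU × List ↥Bas) with hT
  -- the raw avoid-set and its side
  set raw : T → Bool × Set XX := Sum.elim
      (fun t => (t.1, (nwdAt (t.2.1 : II) t.2.2).1))
      (Sum.elim (fun i => (i, Qd))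
        (Sum.elim (fun t => (t.1, ({((g (t.2 : II)) t.1).2} : Set XX)))
          (fun t => (t.1,
            if IsOpen (Dset (Vsel t.1 (t.2.1 : II)) ((t.2.2.1.map Subtype.val).toFinset) t.2.2.2) ∧
               Dense (Dset (Vsel t.1 (t.2.1 : II)) ((t.2.2.1.map Subtype.val).toFinset) t.2.2.2)
            then (Dset (Vsel t.1 (t.2.1 : II)) ((t.2.2.1.map Subtype.val).toFinset) t.2.2.2)ᶜ
            else (∅ : Set XX)))))
    with hraw
  set Bad : T → Set XX := fun t =>
    if (raw t).1 = false then (raw t).2 else (fun z => ptAt β - z) ⁻¹' (raw t).2 with hBad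
  have hrawMeagre : ∀ t, IsMeagre (raw t).2 := by
    intro t
    rcases t with ⟨i, γ, n⟩ | i | ⟨i, γ⟩ | ⟨i, α, l, w⟩
    · exact NWD_isMeagre _
    · exact countable_isMeagre Qd_countable
    · exact countable_isMeagre (countable_singleton _)
    · simp only [hraw, Sum.elim_inr, Sum.elim_inl]
      by_cases hD : IsOpen (Dset (Vsel i (α : II)) ((l.map Subtype.val).toFinset) w) ∧
          Dense (Dset (Vsel i (α : II)) ((l.map Subtype.val).toFinset) w)
      · rw [if_pos hD]
        exact dense_open_compl_isMeagre hD.1 hD.2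
      · rw [if_neg hD]
        exact IsMeagre.empty
  have hBadMeagre : ∀ t, IsMeagre (Bad t) := by
    intro t
    simp only [hBad]
    by_cases hside : (raw t).1 = false
    · rw [if_pos hside]; exact hrawMeagre t
    · rw [if_neg hside]; exact meagre_preimage_sub _ (hrawMeagre t)
  have hTcard : #T < 𝔠 := by
    have hb : #Bool < 𝔠 := lt_of_le_of_lt Cardinal.mk_le_aleph0 aleph0_lt_cont
    have hn : #ℕ < 𝔠 := lt_of_le_of_lt Cardinal.mk_le_aleph0 aleph0_lt_cont
    have hIic : #(↥(Iic β)) < 𝔠 := mk_Iic_lt β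
    have hIio : #(↥(Iio β)) < 𝔠 := mk_Iio_lt β
    have hPUc : #(↥PU) < 𝔠 := by
      rw [hPU]
      exact lt_of_le_of_lt (Cardinal.mk_union_le _ _)
        (Cardinal.add_lt_of_lt Cardinal.aleph0_le_continuum (mk_Lb_lt g false β)
          (mk_Lb_lt g true β))
    have hLPU : #(List ↥PU) < 𝔠 :=
      lt_of_le_of_lt (Cardinal.mk_list_le_max _) (max_lt aleph0_lt_cont hPUc)
    have hLB : #(List ↥Bas) < 𝔠 :=
      lt_of_le_of_lt Cardinal.mk_le_aleph0 aleph0_lt_cont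
    have mulc : ∀ {a b : Cardinal}, a < 𝔠 → b < 𝔠 → a * b < 𝔠 :=
      fun ha hb => Cardinal.mul_lt_of_lt Cardinal.aleph0_le_continuum ha hb
    have addc : ∀ {a b : Cardinal}, a < 𝔠 → b < 𝔠 → a + b < 𝔠 :=
      fun ha hb => Cardinal.add_lt_of_lt Cardinal.aleph0_le_continuum ha hb
    rw [hT]
    rw [Cardinal.mk_sum, Cardinal.mk_sum, Cardinal.mk_sum]
    simp only [Cardinal.lift_id]
    apply addc
    · rw [Cardinal.mk_prod, Cardinal.mk_prod]
      simp only [Cardinal.lift_id]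
      exact mulc hb (mulc hIic hn)
    apply addc hb
    apply addc
    · rw [Cardinal.mk_prod]
      simp only [Cardinal.lift_id]
      exact mulc hb hIio
    · rw [Cardinal.mk_prod, Cardinal.mk_prod, Cardinal.mk_prod]
      simp only [Cardinal.lift_id]
      exact mulc hb (mulc hIic (mulc hLPU hLB))
  rcases nocover hcov Bad hTcard hBadMeagre with ⟨z, hz⟩
  set pt : Bool → XX := fun i => if i then ptAt β - z else z with hpt
  refine ⟨fun i => (VV i, pt i), ?_, ?_, ?_, ?_, ?_, ?_, ?_⟩
  · intro i k; exact (hVVspec i).1 k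
  · intro i; exact (hVVspec i).2
  · show pt false + pt true = ptAt β
    simp only [hpt, if_true, if_false, Bool.false_eq_true]
    ring
  · -- not in Qd
    intro i
    have h2 := hz (Sum.inr (Sum.inl i))
    rw [hBad] at h2
    cases i
    · simpa [hraw, hpt] using h2
    · simp only [hraw, hBad] at h2
      simpa [hpt] using h2
  · -- avoid nwd sets
    intro i γ hγ n
    have h2 := hz (Sum.inl (i, ⟨γ, hγ⟩, n))
    cases i
    · simpa [hBad, hraw, hpt] using h2
    · simp only [hBad, hraw] at h2
      simpa [hpt] using h2
  · -- distinct from previous points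
    intro i γ hγ
    have h2 := hz (Sum.inr (Sum.inr (Sum.inl (i, ⟨γ, hγ⟩))))
    cases i
    · simpa [hBad, hraw, hpt] using h2
    · simp only [hBad, hraw] at h2
      simp only [hpt, if_true] at *
      intro hEq
      apply h2
      simp [hEq]
  · -- the step clause
    intro i α F w hαβ hF hopen hdense
    -- a list representing F
    have hsubPU : Lb g i β ⊆ PU := by
      cases i
      · exact subset_union_left
      · exact subset_union_right
    set l : List ↥PU := F.attach.toList.map
      (fun x => (⟨x.1, hsubPU (hF x.2)⟩ : ↥PU)) with hl
    have hFl : (l.map Subtype.val).toFinset = F := by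
      ext y
      rw [List.mem_toFinset, hl, List.map_map, List.mem_map]
      constructor
      · rintro ⟨x, _, rfl⟩
        exact x.2
      · intro hy
        exact ⟨⟨y, hy⟩, Finset.mem_toList.2 (Finset.mem_attach _ _), rfl⟩
    have hVofeq : Vof (fun i => (VV i, pt i)) g β α i = Vsel i α := by
      unfold Vof
      rw [hVsel]
    have h2 := hz (Sum.inr (Sum.inr (Sum.inr (i, ⟨α, hαβ⟩, l, w))))
    simp only [hBad, hraw, Sum.elim_inr, Sum.elim_inl] at h2
    rw [hVofeq] at hopen hdense ⊢
    show pt i ∈ Dset (Vsel i α) F w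
    have hcond : IsOpen (Dset (Vsel i α) ((l.map Subtype.val).toFinset) w) ∧
        Dense (Dset (Vsel i α) ((l.map Subtype.val).toFinset) w) := by
      rw [hFl]; exact ⟨hopen, hdense⟩
    rw [if_pos hcond] at h2
    rw [hFl] at h2
    cases i
    · rw [if_pos rfl] at h2
      simpa [hpt] using h2
    · rw [if_neg (by simp : ¬ (true = false))] at h2
      simp only [hpt, if_true]
      simpa using h2

/-- the recursive construction -/
noncomputable def Gfun : II → Data :=
  (IsWellFounded.wf (α := II) (r := (· < ·))).fix
    (fun β rec => Classical.choose (stage_exists hcov β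
      (fun γ => if h : γ < β then rec γ h else default)))

lemma Gfun_eq (β : II) : Gfun hcov β = Classical.choose (stage_exists hcov β
    (fun γ => if h : γ < β then Gfun hcov γ else default)) :=
  WellFounded.fix_eq _ _ _

lemma Gok (β : II) : StageOK β (Gfun hcov) (Gfun hcov β) := by
  have h1 := Classical.choose_spec (stage_exists hcov β
    (fun γ => if h : γ < β then Gfun hcov γ else default))
  rw [← Gfun_eq hcov β] at h1
  exact StageOK_congr (fun γ hγ => by simp [hγ]) h1

/-- the point added at stage `β` on side `i` -/
noncomputable def ptOf (i : Bool) (β : II) : XX := ((Gfun hcov β) i).2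

/-- the selection chosen at stage `β` on side `i` -/
noncomputable def VOf (i : Bool) (β : II) : ℕ → Set XX := ((Gfun hcov β) i).1

/-- the two Luzin sets -/
noncomputable def LL (i : Bool) : Set XX := Qd ∪ {x | ∃ γ : II, ptOf hcov i γ = x}

lemma Lb_sub_LL (i : Bool) (β : II) : Lb (Gfun hcov) i β ⊆ LL hcov i := by
  apply union_subset_union_right
  rintro x ⟨γ, _, rfl⟩
  exact ⟨γ, rfl⟩

lemma Qd_sub_LL (i : Bool) : Qd ⊆ LL hcov i := subset_union_left

lemma mem_LL_of_pt (i : Bool) (β : II) : ptOf hcov i β ∈ LL hcov i :=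
  Or.inr ⟨β, rfl⟩

lemma VOf_open (i : Bool) (α : II) (k : ℕ) : IsOpen (VOf hcov i α k) := by
  rcases (Gok hcov α).vmem i k with ⟨j, hj⟩
  rw [VOf, hj]
  exact (eAt α k j).2

lemma pt_inj (i : Bool) : Function.Injective (ptOf hcov i) := by
  intro β γ h
  by_contra hne
  rcases lt_or_gt_of_ne hne with hlt | hlt
  · exact (Gok hcov γ).distinct i β hlt h.symm
  · exact (Gok hcov β).distinct i γ hlt h

lemma pt_not_Qd (i : Bool) (β : II) : ptOf hcov i β ∉ Qd := (Gok hcov β).notQ i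

lemma Vof_Gfun (β α : II) (i : Bool) :
    Vof (Gfun hcov β) (Gfun hcov) β α i = VOf hcov i α := by
  unfold Vof VOf
  by_cases h : α = β
  · subst h; rw [if_pos rfl]
  · rw [if_neg h]

/-- pushing one new point through a `Gstar` family -/
lemma step' (i : Bool) {α β : II} (hαβ : α ≤ β) (F : Finset XX)
    (hF : ↑F ⊆ Lb (Gfun hcov) i β) (hG : Gstar (VOf hcov i α) F) :
    Gstar (VOf hcov i α) (insert (ptOf hcov i β) F) := by
  apply Gstar_insert
  intro w
  have hopen : IsOpen (Dset (VOf hcov i α) F w) := Dset_open (VOf_open hcov i α) F w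
  have hdense : Dense (Dset (VOf hcov i α) F w) := Dset_dense hG w
  have h := (Gok hcov β).step i α F w hαβ hF
    (by rw [Vof_Gfun]; exact hopen) (by rw [Vof_Gfun]; exact hdense)
  rw [Vof_Gfun] at h
  exact h

instance : Nonempty II := by
  rw [← Cardinal.mk_ne_zero_iff, mk_II]
  exact Cardinal.continuum_ne_zero

open Classical in
/-- stage of a point -/
noncomputable def stg (i : Bool) (x : XX) : II :=
  if h : ∃ γ, ptOf hcov i γ = x then h.choose else Classical.arbitrary II

lemma stg_spec {i : Bool} {x : XX} (hx : x ∈ LL hcov i) (hq : x ∉ Qd) :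
    ptOf hcov i (stg hcov i x) = x := by
  rcases hx with hx | hx
  · exact absurd hx hq
  · have hx' : ∃ γ, ptOf hcov i γ = x := hx
    rw [stg, dif_pos hx']
    exact hx'.choose_spec

/-- THE INVARIANT: every finite subset of the final set is captured by the selection
of every stage at which the cover-condition held -/
lemma invariant (i : Bool) (α : II) (hC : Ccond (Lb (Gfun hcov) i α) (eAt α)) :
    ∀ F : Finset XX, ↑F ⊆ LL hcov i → Gstar (VOf hcov i α) F := by
  classical
  intro F
  induction F using Finset.strongInduction with
  | _ F IH =>
  intro hFL
  by_cases hcase : ↑F ⊆ Lb (Gfun hcov) i α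
  · exact (Gok hcov α).vbase i hC F hcase
  · -- there is an element not yet present at stage α; peel off the latest one
    have hex : ∃ x ∈ F, x ∉ Lb (Gfun hcov) i α := by
      by_contra h
      push_neg at h
      exact hcase fun x hx => h x hx
    set Flate : Finset XX := F.filter (fun x => x ∉ Lb (Gfun hcov) i α) with hFlate
    have hFlate_ne : Flate.Nonempty := by
      rcases hex with ⟨x, hx1, hx2⟩
      exact ⟨x, Finset.mem_filter.2 ⟨hx1, hx2⟩⟩
    set B : Finset II := Flate.image (stg hcov i) with hB
    have hBne : B.Nonempty := hFlate_ne.image _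
    set β₀ : II := B.max' hBne with hβ₀
    -- facts about members of Flate
    have hmemLate : ∀ x ∈ Flate, x ∉ Qd ∧ ptOf hcov i (stg hcov i x) = x ∧ stg hcov i x ≤ β₀ := by
      intro x hx
      have hx1 : x ∈ F := (Finset.mem_filter.1 hx).1
      have hx2 : x ∉ Lb (Gfun hcov) i α := (Finset.mem_filter.1 hx).2
      have hq : x ∉ Qd := fun h => hx2 (Qd_sub_Lb _ i α h)
      have hpt : ptOf hcov i (stg hcov i x) = x := stg_spec hcov (hFL hx1) hq
      exact ⟨hq, hpt, B.le_max' _ (Finset.mem_image.2 ⟨x, hx, rfl⟩)⟩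
    -- α ≤ β₀
    have hαβ₀ : α ≤ β₀ := by
      rcases hFlate_ne with ⟨x, hx⟩
      rcases hmemLate x hx with ⟨hq, hpt, hle⟩
      have hx2 : x ∉ Lb (Gfun hcov) i α := (Finset.mem_filter.1 hx).2
      by_contra hlt
      push_neg at hlt
      exact hx2 (Or.inr ⟨stg hcov i x, lt_of_le_of_lt hle hlt, hpt⟩)
    -- the element at stage β₀
    have hβ₀mem : β₀ ∈ B := B.max'_mem hBne
    rcases Finset.mem_image.1 hβ₀mem with ⟨x₁, hx₁, hstg₁⟩
    rcases hmemLate x₁ hx₁ with ⟨hq₁, hpt₁, _⟩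
    set xstar : XX := ptOf hcov i β₀ with hxstar
    have hxstar_eq : xstar = x₁ := by rw [hxstar, ← hstg₁, hpt₁]
    have hxstarF : xstar ∈ F := by rw [hxstar_eq]; exact (Finset.mem_filter.1 hx₁).1
    set F' : Finset XX := F.erase xstar with hF'
    have hF'sub : F' ⊂ F := Finset.erase_ssubset hxstarF
    have hF'LL : ↑F' ⊆ LL hcov i := fun y hy => hFL (Finset.erase_subset _ _ hy)
    have hG' : Gstar (VOf hcov i α) F' := IH F' hF'sub hF'LL
    have hF'Lb : ↑F' ⊆ Lb (Gfun hcov) i β₀ := by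
      intro y hy
      have hyF : y ∈ F := Finset.erase_subset _ _ hy
      have hyne : y ≠ xstar := Finset.ne_of_mem_erase hy
      by_cases hyα : y ∈ Lb (Gfun hcov) i α
      · exact Lb_mono (Gfun hcov) i hαβ₀ hyα
      · have hyLate : y ∈ Flate := Finset.mem_filter.2 ⟨hyF, hyα⟩
        rcases hmemLate y hyLate with ⟨hqy, hpty, hley⟩
        have : stg hcov i y ≠ β₀ := by
          intro h
          apply hyne
          rw [hxstar, ← h, hpty]
        exact Or.inr ⟨stg hcov i y, lt_of_le_of_ne hley this, hpty⟩
    have := step' hcov i hαβ₀ F' hF'Lb hG'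
    rw [← hxstar] at this
    rw [Finset.insert_erase hxstarF] at this
    exact this

/-- a fixed trivial enumeration family -/
noncomputable def e₀ : ℕ → ℕ → Opn := fun _ _ => ⟨∅, isOpen_empty⟩
noncomputable def C₀ : ℕ → NWD := fun _ => ⟨∅, isClosed_empty, interior_empty⟩

/-! ### the Luzin property -/

lemma LL_big (i : Bool) : 𝔠 ≤ #(LL hcov i) := by
  have hinj : Function.Injective (fun β : II => (⟨ptOf hcov i β, mem_LL_of_pt hcov i β⟩ :
      ↥(LL hcov i))) := by
    intro β γ h
    exact pt_inj hcov i (congrArg Subtype.val h)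
  calc 𝔠 = #II := (mk_II).symm
    _ ≤ #(LL hcov i) := Cardinal.mk_le_of_injective hinj

lemma LL_luzin (i : Bool) {M : Set XX} (hM : IsMeagre M) : #(↥(LL hcov i ∩ M)) < 𝔠 := by
  rcases isMeagre_iff_countable_union_isNowhereDense.1 hM with ⟨S, hSnwd, hScnt, hScov⟩
  have hS'cnt : (insert (∅ : Set XX) S).Countable := hScnt.insert _
  have hS'ne : (insert (∅ : Set XX) S).Nonempty := ⟨∅, mem_insert _ _⟩
  rcases hS'cnt.exists_eq_range hS'ne with ⟨f, hf⟩
  have hfnwd : ∀ n, IsNowhereDense (f n) := by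
    intro n
    have : f n ∈ insert (∅ : Set XX) S := by rw [hf]; exact ⟨n, rfl⟩
    rcases this with h | h
    · rw [h]; exact isClosed_empty.isNowhereDense_iff.2 (by simp)
    · exact hSnwd _ h
  set C : ℕ → NWD := fun n => ⟨closure (f n), isClosed_closure, hfnwd n⟩ with hC
  have hMsub : M ⊆ ⋃ n, (C n).1 := by
    intro x hx
    rcases hScov hx with ⟨t, htS, hxt⟩
    have : t ∈ insert (∅ : Set XX) S := mem_insert_of_mem _ htS
    rw [hf] at this
    rcases this with ⟨n, rfl⟩
    exact mem_iUnion.2 ⟨n, subset_closure hxt⟩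
  rcases hEn_surj (e₀, C, (0 : XX)) with ⟨γ, hγ⟩
  have hnwdAtγ : nwdAt γ = C := by rw [nwdAt, hγ]
  have hsub : LL hcov i ∩ M ⊆ Qd ∪ (ptOf hcov i) '' (Iic γ) := by
    rintro x ⟨hxL, hxM⟩
    rcases hxL with hxQ | ⟨β, rfl⟩
    · exact Or.inl hxQ
    · refine Or.inr ⟨β, ?_, rfl⟩
      by_contra hβγ
      have hγβ : γ ≤ β := le_of_lt (not_le.1 hβγ)
      rcases mem_iUnion.1 (hMsub hxM) with ⟨n, hn⟩
      exact (Gok hcov β).avoidNwd i γ hγβ n (by rw [hnwdAtγ]; exact hn)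
  calc #(↥(LL hcov i ∩ M)) ≤ #(↥(Qd ∪ (ptOf hcov i) '' (Iic γ))) :=
        Cardinal.mk_le_mk_of_subset hsub
    _ ≤ #(↥Qd) + #(↥((ptOf hcov i) '' (Iic γ))) := Cardinal.mk_union_le _ _
    _ < 𝔠 := by
        apply Cardinal.add_lt_of_lt Cardinal.aleph0_le_continuum
        · exact lt_of_le_of_lt Qd_countable.le_aleph0 aleph0_lt_cont
        · exact lt_of_le_of_lt Cardinal.mk_image_le (mk_Iic_lt γ)

/-! ### the sum property -/

lemma LL_sum : LL hcov false + LL hcov true = Set.univ := by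
  apply eq_univ_of_forall
  intro x
  rcases hEn_surj (e₀, C₀, x) with ⟨β, hβ⟩
  have hx : ptAt β = x := by rw [ptAt, hβ]
  rw [Set.mem_add]
  exact ⟨ptOf hcov false β, mem_LL_of_pt hcov false β,
    ptOf hcov true β, mem_LL_of_pt hcov true β, by rw [← hx]; exact (Gok hcov β).sum⟩

/-! ### the selection property -/

lemma LL_S1 (i : Bool) : S1OmegaOmega (LL hcov i) := by
  classical
  intro 𝒰 h𝒰
  -- each family is countable and nonempty
  have hne : ∀ n, (𝒰 n).Nonempty := by
    intro n
    rcases (h𝒰 n).2.2.2 ∅ (empty_subset _) finite_empty with ⟨U, hU, _⟩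
    exact ⟨U, hU⟩
  have henum : ∀ n, ∃ f : ℕ → Set XX, 𝒰 n = Set.range f :=
    fun n => (h𝒰 n).1.exists_eq_range (hne n)
  set f : ℕ → ℕ → Set XX := fun n => (henum n).choose with hfdef
  have hf : ∀ n, 𝒰 n = Set.range (f n) := fun n => (henum n).choose_spec
  have hfopen : ∀ n j, IsOpen (f n j) := by
    intro n j
    exact (h𝒰 n).2.1 _ (by rw [hf n]; exact ⟨j, rfl⟩)
  set e : ℕ → ℕ → Opn := fun n j => ⟨f n j, hfopen n j⟩ with hedef
  rcases hEn_surj (e, C₀, (0 : XX)) with ⟨α, hα⟩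
  have heα : eAt α = e := by rw [eAt, hα]
  -- the cover condition holds at stage α
  have hC : Ccond (Lb (Gfun hcov) i α) (eAt α) := by
    intro n F hFsub
    have hFLL : ↑F ⊆ LL hcov i := fun x hx => Lb_sub_LL hcov i α (hFsub hx)
    rcases (h𝒰 n).2.2.2 ↑F hFLL (F.finite_toSet) with ⟨U, hU, hFU⟩
    rw [hf n] at hU
    rcases hU with ⟨j, rfl⟩
    refine ⟨j, fun x hx => ?_⟩
    rw [heα]
    exact hFU hx
  refine ⟨VOf hcov i α, ?_, ?_, ?_⟩
  · intro n
    rcases (Gok hcov α).vmem i n with ⟨j, hj⟩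
    rw [hf n]
    refine ⟨j, ?_⟩
    show (e n j).1 = VOf hcov i α n
    rw [← heα]
    exact hj.symm
  · -- LL i is not one of the selected sets
    rintro ⟨n, hn⟩
    apply (h𝒰 n).2.2.1
    rw [← hn]
    rcases (Gok hcov α).vmem i n with ⟨j, hj⟩
    have : VOf hcov i α n ∈ 𝒰 n := by
      rw [hf n]
      refine ⟨j, ?_⟩
      show (e n j).1 = VOf hcov i α n
      rw [← heα]
      exact hj.symm
    exact this
  · -- every finite subset is covered
    intro F hFsub hFfin
    have hFin : (hFfin.toFinset : Set XX) = F := hFfin.coe_toFinset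
    have hGst : Gstar (VOf hcov i α) hFfin.toFinset :=
      invariant hcov i α hC hFfin.toFinset (by rw [hFin]; exact hFsub)
    rcases hGst [] with ⟨k, hk, _⟩
    refine ⟨VOf hcov i α k, ⟨k, rfl⟩, ?_⟩
    intro x hx
    exact hk x (hFfin.mem_toFinset.2 hx)

end Constr

end Stmt12Aux

open Stmt12Aux in
/-- Assuming `cov(ℳ) = 𝔠` (for the space `ℤ^ℕ`), there are `𝔠`-Luzin sets
`L₀, L₁ ⊆ ℤ^ℕ` satisfying `S1(Ω,Ω)` with `L₀ + L₁ = ℤ^ℕ`. -/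
theorem stmt12
    (hcov : sInf {c : Cardinal | ∃ 𝒜 : Set (Set (ℕ → ℤ)),
        (∀ A ∈ 𝒜, IsMeagre A) ∧ ⋃₀ 𝒜 = Set.univ ∧ c = Cardinal.mk 𝒜}
      = Cardinal.continuum) :
    ∃ L₀ L₁ : Set (ℕ → ℤ), IsLuzinZN L₀ ∧ IsLuzinZN L₁ ∧
      S1OmegaOmega L₀ ∧ S1OmegaOmega L₁ ∧ L₀ + L₁ = Set.univ := by
  refine ⟨LL hcov false, LL hcov true, ⟨LL_big hcov false, fun M hM => LL_luzin hcov false hM⟩,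
    ⟨LL_big hcov true, fun M hM => LL_luzin hcov true hM⟩,
    LL_S1 hcov false, LL_S1 hcov true, LL_sum hcov⟩
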